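/- Corollary of the Rough Gronwall Lemma (used for uniqueness arguments): Fix T > 0 and let G : [0,T] → [0,∞) be a path with G_0 = 0 such that for some constants C, L > 0, κ ≥ 1 and a regular control ω₁ on [0,T], one has δG_{st} := G_t − G_s ≤ C (sup_{0≤r≤t} G_r) ω₁(s,t)^{1/κ} for every pair s < t in [0,T] satisfying ω₁(s,t) ≤ L. Then G_t = 0 for all t ∈ [0,T]. -/

import Mathlib

/-- A control on the interval `[a,b]`: a nonnegative superadditive function of pairs
`s ≤ t` in `[a,b]`. -/
def IsControl (a b : ℝ) (ω : ℝ → ℝ → ℝ) : Prop :=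
  (∀ s t, a ≤ s → s ≤ t → t ≤ b → 0 ≤ ω s t) ∧
  (∀ s u t, a ≤ s → s ≤ u → u ≤ t → t ≤ b → ω s u + ω u t ≤ ω s t)

/-- A regular control on `[a,b]`: a control with `ω(s,t) → 0` as `t - s → 0`. -/
def IsRegularControl (a b : ℝ) (ω : ℝ → ℝ → ℝ) : Prop :=
  IsControl a b ω ∧
  ∀ ε > (0 : ℝ), ∃ δ > (0 : ℝ), ∀ s t, a ≤ s → s ≤ t → t ≤ b → t - s < δ → ω s t < ε

/-- **Corollary of the Rough Gronwall Lemma** (used for uniqueness arguments).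
Fix `T > 0` and let `G : [0,T] → [0,∞)` be a path with `G_0 = 0` such that for some
constants `C, L > 0`, `κ ≥ 1` and a regular control `ω₁` on `[0,T]`, one has
`G_t − G_s ≤ C (sup_{0 ≤ r ≤ t} G_r) ω₁(s,t)^{1/κ}`
for every pair `s < t` in `[0,T]` satisfying `ω₁(s,t) ≤ L`. Then `G_t = 0` for all
`t ∈ [0,T]`. -/
theorem rough_gronwall_corollary
    (T : ℝ) (hT : 0 < T) (G : ℝ → ℝ)
    (hGnonneg : ∀ t ∈ Set.Icc (0 : ℝ) T, 0 ≤ G t)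
    (hG0 : G 0 = 0)
    (C L κ : ℝ) (hC : 0 < C) (hL : 0 < L) (hκ : 1 ≤ κ)
    (ω₁ : ℝ → ℝ → ℝ)
    (hω₁ : IsRegularControl 0 T ω₁)
    (hyp : ∀ s t, s ∈ Set.Icc (0 : ℝ) T → t ∈ Set.Icc (0 : ℝ) T → s < t → ω₁ s t ≤ L →
      G t - G s ≤ C * (⨆ r : Set.Icc (0 : ℝ) t, G r) * (ω₁ s t) ^ (1 / κ)) :
    ∀ t ∈ Set.Icc (0 : ℝ) T, G t = 0 := by
  obtain ⟨⟨hωpos, hωsup⟩, hreg⟩ := hω₁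
  have hκ0 : (0:ℝ) < κ := lt_of_lt_of_le one_pos hκ
  set ε : ℝ := min L ((2*C)⁻¹ ^ κ) with hεdef
  have h2C : (0:ℝ) < (2*C)⁻¹ := by positivity
  have hεpos : 0 < ε := lt_min hL (Real.rpow_pos_of_pos h2C κ)
  obtain ⟨δ, hδpos, hδ⟩ := hreg ε hεpos
  have hεL : ε ≤ L := min_le_left _ _
  -- key rpow bound
  have key : ∀ w M : ℝ, 0 ≤ w → w ≤ ε → 0 ≤ M → C * M * w ^ (1/κ) ≤ M / 2 := by
    intro w M hw hwε hM
    have h1 : w ^ (1/κ) ≤ ε ^ (1/κ) := Real.rpow_le_rpow hw hwε (by positivity)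
    have h2 : ε ^ (1/κ) ≤ ((2*C)⁻¹ ^ κ) ^ (1/κ) :=
      Real.rpow_le_rpow hεpos.le (min_le_right _ _) (by positivity)
    have h3 : ((2*C)⁻¹ ^ κ) ^ (1/κ) = (2*C)⁻¹ := by
      rw [← Real.rpow_mul h2C.le, mul_one_div_cancel hκ0.ne', Real.rpow_one]
    have h4 : w ^ (1/κ) ≤ (2*C)⁻¹ := by rw [← h3]; exact h1.trans h2
    have h5 : C * M * w ^ (1/κ) ≤ C * M * (2*C)⁻¹ :=
      mul_le_mul_of_nonneg_left h4 (by positivity)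
    have h6 : C * M * (2*C)⁻¹ = M / 2 := by field_simp
    linarith
  -- the set of times up to which G vanishes
  set Z : Set ℝ := {a | a ∈ Set.Icc (0:ℝ) T ∧ ∀ r ∈ Set.Icc (0:ℝ) a, G r = 0} with hZdef
  have h0Z : (0:ℝ) ∈ Z := by
    refine ⟨⟨le_refl 0, hT.le⟩, fun r hr => ?_⟩
    have : r = 0 := le_antisymm hr.2 hr.1
    rw [this, hG0]
  have hZne : Z.Nonempty := ⟨0, h0Z⟩
  have hZbdd : BddAbove Z := ⟨T, fun a ha => ha.1.2⟩
  set c := sSup Z with hcdef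
  have hcT : c ≤ T := csSup_le hZne (fun a ha => ha.1.2)
  have hc0 : (0:ℝ) ≤ c := le_csSup hZbdd h0Z
  obtain ⟨s, hsZ, hs⟩ : ∃ s ∈ Z, c - δ/2 < s :=
    exists_lt_of_lt_csSup hZne (by linarith)
  set t₀ := min T (c + δ/2) with ht₀def
  have hs0 : (0:ℝ) ≤ s := hsZ.1.1
  have hsc : s ≤ c := le_csSup hZbdd hsZ
  have hst0 : s ≤ t₀ := le_min hsZ.1.2 (by linarith)
  have ht₀T : t₀ ≤ T := min_le_left _ _
  have hst₀δ : t₀ - s < δ := by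
    have : t₀ ≤ c + δ/2 := min_le_right _ _
    linarith
  have hωst₀ : ω₁ s t₀ < ε := hδ s t₀ hs0 hst0 ht₀T hst₀δ
  have hωmono : ∀ r, s < r → r ≤ t₀ → ω₁ s r ≤ ω₁ s t₀ := by
    intro r h1 h2
    have ha := hωsup s r t₀ hs0 h1.le h2 ht₀T
    have hb := hωpos r t₀ (le_trans hs0 h1.le) h2 ht₀T
    linarith
  have hGs : G s = 0 := hsZ.2 s ⟨hs0, le_refl s⟩
  -- express the iSup as a sSup of an image
  set Msup : ℝ → ℝ := fun u => sSup (G '' Set.Icc 0 u) with hMdef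
  have hMeq : ∀ u : ℝ, (⨆ r : Set.Icc (0:ℝ) u, G r) = Msup u := by
    intro u
    rw [hMdef]
    simp only [iSup, Set.image_eq_range]
  -- the key per-point estimate
  have step : ∀ r, s < r → r ≤ t₀ → G r ≤ C * Msup r * ω₁ s r ^ (1/κ) := by
    intro r h1 h2
    have hr0 : (0:ℝ) ≤ r := le_trans hs0 h1.le
    have hrT : r ≤ T := le_trans h2 ht₀T
    have hωL : ω₁ s r ≤ L := le_trans (hωmono r h1 h2) (le_trans hωst₀.le hεL)
    have := hyp s r ⟨hs0, le_trans hst0 ht₀T⟩ ⟨hr0, hrT⟩ h1 hωL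
    rw [hMeq, hGs] at this
    linarith
  -- main claim: G vanishes on (s, t₀]
  have main : ∀ t, s < t → t ≤ t₀ → G t = 0 := by
    intro t hst htt₀
    have ht0 : (0:ℝ) ≤ t := le_trans hs0 hst.le
    have htT : t ≤ T := le_trans htt₀ ht₀T
    by_cases hB : BddAbove (G '' Set.Icc 0 t)
    · have h0mem : (0:ℝ) ∈ G '' Set.Icc 0 t := ⟨0, ⟨le_refl 0, ht0⟩, hG0⟩
      have hMt0 : 0 ≤ Msup t := le_csSup hB h0mem
      have hub : ∀ y ∈ G '' Set.Icc 0 t, y ≤ Msup t / 2 := by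
        rintro y ⟨r, hr, rfl⟩
        rcases le_or_gt r s with h | h
        · have hz : G r = 0 := hsZ.2 r ⟨hr.1, h⟩
          rw [hz]; linarith
        · have hsub : G '' Set.Icc 0 r ⊆ G '' Set.Icc 0 t :=
            Set.image_mono (Set.Icc_subset_Icc_right hr.2)
          have hBr : BddAbove (G '' Set.Icc 0 r) := hB.mono hsub
          have h0memr : (0:ℝ) ∈ G '' Set.Icc 0 r := ⟨0, ⟨le_refl 0, hr.1⟩, hG0⟩
          have hMr0 : 0 ≤ Msup r := le_csSup hBr h0memr
          have hMrt : Msup r ≤ Msup t := csSup_le_csSup hB ⟨0, h0memr⟩ hsub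
          have h1 := step r h (le_trans hr.2 htt₀)
          have h2 := key (ω₁ s r) (Msup r)
            (hωpos s r hs0 h.le (le_trans hr.2 htT))
            (le_trans (hωmono r h (le_trans hr.2 htt₀)) hωst₀.le) hMr0
          linarith
      have hMle : Msup t ≤ Msup t / 2 := Real.sSup_le hub (by linarith)
      have hMt : Msup t = 0 := le_antisymm (by linarith) hMt0
      have hGle : G t ≤ Msup t := le_csSup hB ⟨t, ⟨ht0, le_refl t⟩, rfl⟩
      exact le_antisymm (by linarith) (hGnonneg t ⟨ht0, htT⟩)
    · have hMt : Msup t = 0 := Real.sSup_of_not_bddAbove hB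
      have h1 := step t hst htt₀
      rw [hMt] at h1
      have h2 : C * 0 * ω₁ s t ^ (1/κ) = 0 := by ring
      exact le_antisymm (by linarith) (hGnonneg t ⟨ht0, htT⟩)
  have ht₀Z : t₀ ∈ Z := by
    refine ⟨⟨le_trans hs0 hst0, ht₀T⟩, fun r hr => ?_⟩
    rcases le_or_gt r s with h | h
    · exact hsZ.2 r ⟨hr.1, h⟩
    · exact main r h hr.2
  have ht₀c : t₀ ≤ c := le_csSup hZbdd ht₀Z
  intro t ht
  have ht₀T' : t₀ = T := by
    rcases lt_or_ge (c + δ/2) T with h | h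
    · exfalso
      have : t₀ = c + δ/2 := min_eq_right h.le
      linarith
    · exact min_eq_left h
  exact ht₀Z.2 t (ht₀T' ▸ ht)
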